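/- For every nonnegative integer j, the square of the central binomial coefficient satisfies C(2j, j)^2 < 4^(2j+1) / (π(4j+1)). -/

import Mathlib

open Real Filter Topology

noncomputable def cbf (n : ℕ) : ℝ :=
  Real.pi * (4 * n + 1) * ((Nat.choose (2 * n) n : ℝ)) ^ 2 / 4 ^ (2 * n + 1)

lemma cb_pos (n : ℕ) : (0:ℝ) < (Nat.choose (2*n) n : ℝ) := by
  exact_mod_cast Nat.choose_pos (by omega)

lemma cb_succ (n : ℕ) :
    ((Nat.choose (2*(n+1)) (n+1) : ℝ)) * (n+1) = 2*(2*n+1) * (Nat.choose (2*n) n : ℝ) := by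
  have h := Nat.succ_mul_centralBinom_succ n
  unfold Nat.centralBinom at h
  have : ((n + 1) * Nat.choose (2*(n+1)) (n+1) : ℝ) = (2*(2*n+1) * Nat.choose (2*n) n : ℝ) := by
    exact_mod_cast congrArg (Nat.cast : ℕ → ℝ) h
  push_cast at this ⊢
  linarith [this]

lemma cbf_lt_succ (n : ℕ) : cbf n < cbf (n+1) := by
  have hc := cb_pos n
  have hc1 := cb_pos (n+1)
  have hrec := cb_succ n
  have hpi := Real.pi_pos
  set c := ((Nat.choose (2*n) n : ℝ)) with hcdef
  set c1 := ((Nat.choose (2*(n+1)) (n+1) : ℝ)) with hc1def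
  have hsq : c1^2 * ((n:ℝ)+1)^2 = 4*(2*(n:ℝ)+1)^2 * c^2 := by
    push_cast at hrec
    linear_combination (c1*((n:ℝ)+1) + 2*(2*(n:ℝ)+1)*c) * hrec
  have keyeq : (4*(n:ℝ)+5) * c1^2 * ((n:ℝ)+1)^2
      = 16*(4*(n:ℝ)+1) * c^2 * ((n:ℝ)+1)^2 + 4*c^2 := by
    linear_combination (4*(n:ℝ)+5) * hsq
  have h5 : (0:ℝ) < ((n:ℝ)+1)^2 := by positivity
  have key : 16*(4*(n:ℝ)+1) * c^2 < (4*(n:ℝ)+5) * c1^2 := by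
    nlinarith [keyeq, mul_pos hc hc, h5]
  unfold cbf
  rw [div_lt_div_iff₀ (by positivity) (by positivity)]
  have h4 : (4:ℝ) ^ (2*(n+1)+1) = 16 * 4 ^ (2*n+1) := by ring
  push_cast
  rw [h4]
  have P : (0:ℝ) < Real.pi * 4 ^ (2*n+1) := by positivity
  nlinarith [mul_lt_mul_of_pos_left key P]

lemma W_eq_cb (n : ℕ) :
    Real.Wallis.W n = 16 ^ n / (((Nat.choose (2*n) n : ℝ))^2 * (2*n+1)) := by
  rw [Real.Wallis.W_eq_factorial_ratio]
  have h : ((2*n).factorial : ℝ) = (Nat.choose (2*n) n : ℝ) * n.factorial * n.factorial := by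
    have := Nat.choose_mul_factorial_mul_factorial (show n ≤ 2*n by omega)
    have h2 : 2*n - n = n := by omega
    rw [h2] at this
    exact_mod_cast this.symm
  have hf : (0:ℝ) < (n.factorial : ℝ) := by exact_mod_cast n.factorial_pos
  have h16 : (2:ℝ) ^ (4*n) = 16 ^ n := by
    rw [pow_mul]; norm_num
  rw [h, h16]
  have hc := cb_pos n
  field_simp

lemma cbf_le (m : ℕ) : cbf m ≤ ((4*m+1) * (m+1)) / (2*m+1)^2 := by
  have hW := Real.Wallis.le_W m
  rw [W_eq_cb] at hW
  have hc := cb_pos m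
  have hpi := Real.pi_pos
  have h1 : (0:ℝ) < (2*m+1)^2 := by positivity
  have hkey : Real.pi * (2*m+1)^2 * ((Nat.choose (2*m) m : ℝ))^2 ≤ 16^m * (2*(2*m+2)) := by
    rw [div_mul_div_comm, div_le_div_iff₀ (by positivity) (by positivity)] at hW
    nlinarith [hW]
  unfold cbf
  rw [div_le_div_iff₀ (by positivity) h1]
  have h4 : (4:ℝ) ^ (2*m+1) = 4 * 16 ^ m := by
    rw [pow_succ, pow_mul]; norm_num; ring
  push_cast
  rw [h4]
  nlinarith [hkey, pow_pos (show (0:ℝ) < 16 by norm_num) m]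

lemma tendsto_g : Tendsto (fun m : ℕ => ((4*(m:ℝ)+1) * ((m:ℝ)+1)) / (2*(m:ℝ)+1)^2) atTop (𝓝 1) := by
  have h : ∀ m : ℕ, 1 ≤ m → ((4*(m:ℝ)+1) * (m+1)) / (2*m+1)^2 ≤ 1 + 1/m := by
    intro m hm
    have hm' : (1:ℝ) ≤ m := by exact_mod_cast hm
    have hm0 : (0:ℝ) < m := by linarith
    have h1 : (0:ℝ) < (2*(m:ℝ)+1)^2 := by positivity
    have he : (1:ℝ) + 1/m = ((m:ℝ)+1)/m := by field_simp
    rw [he, div_le_div_iff₀ h1 hm0]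
    nlinarith
  have hlo : ∀ m : ℕ, (1:ℝ) ≤ ((4*(m:ℝ)+1) * (m+1)) / (2*m+1)^2 := by
    intro m
    have h1 : (0:ℝ) < (2*(m:ℝ)+1)^2 := by positivity
    rw [le_div_iff₀ h1]
    nlinarith [Nat.cast_nonneg (α := ℝ) m]
  have hhi : Tendsto (fun m : ℕ => (1:ℝ) + 1/m) atTop (𝓝 1) := by
    have := tendsto_one_div_atTop_nhds_zero_nat (𝕜 := ℝ)
    simpa using tendsto_const_nhds.add this
  refine tendsto_of_tendsto_of_tendsto_of_le_of_le' tendsto_const_nhds hhi ?_ ?_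
  · exact Eventually.of_forall hlo
  · filter_upwards [eventually_ge_atTop 1] with m hm using h m hm

lemma cbf_lt_one (n : ℕ) : cbf n < 1 := by
  have hmono : StrictMono cbf := strictMono_nat_of_lt_succ cbf_lt_succ
  have hle : cbf (n+1) ≤ 1 := by
    refine ge_of_tendsto tendsto_g ?_
    filter_upwards [eventually_ge_atTop (n+1)] with m hm
    exact (hmono.monotone hm).trans (cbf_le m)
  exact lt_of_lt_of_le (cbf_lt_succ n) hle

theorem central_binom_sq_lt (j : ℕ) :
    ((Nat.choose (2 * j) j : ℝ)) ^ 2 < 4 ^ (2 * j + 1) / (Real.pi * (4 * j + 1)) := by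
  have h := cbf_lt_one j
  unfold cbf at h
  have hpi := Real.pi_pos
  have hd : (0:ℝ) < Real.pi * (4*j+1) := by positivity
  rw [div_lt_one (by positivity)] at h
  rw [lt_div_iff₀ hd]
  nlinarith [h]
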